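/- Let a be strongly degenerate at x₀ ∈ (0,1). Then for all x ∈ [0,1] ∖ {x₀}, (x − x₀)²/a(x) ≤ C, where C := max{ x₀²/a(0), (1 − x₀)²/a(1) }. -/

import Mathlib

open MeasureTheory Set Filter

noncomputable section

/-- Absolute continuity of `u` on `[c,d]`, encoded via the fundamental theorem of calculus
with an integrable derivative. -/
def ACOn (u : ℝ → ℝ) (c d : ℝ) : Prop :=
  IntervalIntegrable (deriv u) volume c d ∧
    ∀ x ∈ Icc c d, u x = u c + ∫ t in c..x, deriv u t

/-- Membership in `H¹(0,1)`. -/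
def MemH1 (u : ℝ → ℝ) : Prop :=
  ACOn u 0 1 ∧ IntegrableOn (fun x => (u x)^2) (Ioo 0 1) ∧
    IntegrableOn (fun x => (deriv u x)^2) (Ioo 0 1)

/-- `a ∈ W^{1,1}(0,1)`. -/
def W11 (a : ℝ → ℝ) : Prop := ACOn a 0 1

/-- `a ∈ W^{1,∞}(0,1)`. -/
def W1infty (a : ℝ → ℝ) : Prop :=
  ACOn a 0 1 ∧ ∃ M : ℝ, ∀ᵐ x ∂(volume.restrict (Icc (0:ℝ) 1)), |deriv a x| ≤ M

/-- Common part of the degeneracy conditions at `x₀` with constant `K`. -/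
def DegAt (a : ℝ → ℝ) (x₀ K : ℝ) : Prop :=
  x₀ ∈ Ioo (0:ℝ) 1 ∧ a x₀ = 0 ∧ (∀ x ∈ Icc (0:ℝ) 1, x ≠ x₀ → 0 < a x) ∧
    ∀ᵐ x ∂(volume.restrict (Icc (0:ℝ) 1)), (x - x₀) * deriv a x ≤ K * a x

/-- `a` is weakly degenerate at `x₀` with constant `K`. -/
def WeaklyDeg (a : ℝ → ℝ) (x₀ K : ℝ) : Prop :=
  DegAt a x₀ K ∧ W11 a ∧ K ∈ Ioo (0:ℝ) 1

/-- `a` is strongly degenerate at `x₀` with constant `K`. -/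
def StronglyDeg (a : ℝ → ℝ) (x₀ K : ℝ) : Prop :=
  DegAt a x₀ K ∧ W1infty a ∧ K ∈ Ico (1:ℝ) 2

/-- Weakly (`wk = true`) or strongly (`wk = false`) degenerate. -/
def Deg (a : ℝ → ℝ) (x₀ K : ℝ) (wk : Bool) : Prop :=
  cond wk (WeaklyDeg a x₀ K) (StronglyDeg a x₀ K)

/-- `H¹_a(0,1)` in the weakly degenerate case: absolutely continuous on `[0,1]`
with `√a · u' ∈ L²(0,1)`. -/
def MemH1aWeak (a u : ℝ → ℝ) : Prop :=
  ACOn u 0 1 ∧ IntegrableOn (fun x => a x * (deriv u x)^2) (Ioo 0 1)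

/-- Locally absolutely continuous on `[0,x₀) ∪ (x₀,1]`. -/
def LocACAway (u : ℝ → ℝ) (x₀ : ℝ) : Prop :=
  (∀ c d : ℝ, 0 ≤ c → c ≤ d → d < x₀ → ACOn u c d) ∧
  (∀ c d : ℝ, x₀ < c → c ≤ d → d ≤ 1 → ACOn u c d)

/-- `H¹_a(0,1)` in the strongly degenerate case. -/
def MemH1aStrong (a u : ℝ → ℝ) (x₀ : ℝ) : Prop :=
  IntegrableOn (fun x => (u x)^2) (Ioo 0 1) ∧ LocACAway u x₀ ∧
    IntegrableOn (fun x => a x * (deriv u x)^2) (Ioo 0 1)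

/-- `H¹_a(0,1)`, weak (`wk = true`) or strong (`wk = false`) version. -/
def MemH1a (a u : ℝ → ℝ) (x₀ : ℝ) (wk : Bool) : Prop :=
  cond wk (MemH1aWeak a u) (MemH1aStrong a u x₀)

/-- `H²_a(0,1) = {u ∈ H¹_a(0,1) : a u' ∈ H¹(0,1)}`. -/
def MemH2a (a u : ℝ → ℝ) (x₀ : ℝ) (wk : Bool) : Prop :=
  MemH1a a u x₀ wk ∧ ACOn (fun x => a x * deriv u x) 0 1 ∧
    IntegrableOn (fun x => (deriv (fun y => a y * deriv u y) x)^2) (Ioo 0 1)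

/-- `D(A₁) = {u ∈ H²_a(0,1) : u'(0) = u'(1) = 0}`. -/
def MemDA1 (a u : ℝ → ℝ) (x₀ : ℝ) (wk : Bool) : Prop :=
  MemH2a a u x₀ wk ∧ deriv u 0 = 0 ∧ deriv u 1 = 0

/-- `L²_{1/a}(0,1)`. -/
def MemL2inva (a u : ℝ → ℝ) : Prop :=
  IntegrableOn (fun x => (u x)^2) (Ioo 0 1) ∧
    IntegrableOn (fun x => (u x)^2 / a x) (Ioo 0 1)

/-- `H¹_{1/a}(0,1) = L²_{1/a}(0,1) ∩ H¹(0,1)`. -/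
def MemH1inva (a u : ℝ → ℝ) : Prop :=
  MemL2inva a u ∧ ACOn u 0 1 ∧ IntegrableOn (fun x => (deriv u x)^2) (Ioo 0 1)

/-- `H²_{1/a}(0,1) = {u ∈ H¹_{1/a}(0,1) : u' ∈ H¹(0,1)}` (then `a u'' ∈ L²_{1/a}`). -/
def MemH2inva (a u : ℝ → ℝ) : Prop :=
  MemH1inva a u ∧ ACOn (deriv u) 0 1 ∧
    IntegrableOn (fun x => a x * (deriv (deriv u) x)^2) (Ioo 0 1)

/-- `D(A₂) = {u ∈ H²_{1/a}(0,1) : u'(0) = u'(1) = 0}`. -/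
def MemDA2 (a u : ℝ → ℝ) : Prop :=
  MemH2inva a u ∧ deriv u 0 = 0 ∧ deriv u 1 = 0

/-- The time weight `Θ(t) = 1/(t(T-t))⁴`. -/
def Theta (T t : ℝ) : ℝ := 1 / (t * (T - t))^4

/-- The space weight `ψ(x) = c₁ (∫_{x₀}^x (y-x₀)/a(y) dy − c₂)`. -/
def psiW (a : ℝ → ℝ) (x₀ c₁ c₂ x : ℝ) : ℝ :=
  c₁ * ((∫ y in x₀..x, (y - x₀) / a y) - c₂)

/-- The weight `φ(t,x) = Θ(t) ψ(x)`. -/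
def phiW (a : ℝ → ℝ) (x₀ c₁ c₂ T t x : ℝ) : ℝ := Theta T t * psiW a x₀ c₁ c₂ x

/-- The space weight `μ(x) = d₁ (∫_{x₀}^x (y-x₀)e^{R(y-x₀)²}/a(y) dy − d₂)`. -/
def muW (a : ℝ → ℝ) (x₀ d₁ d₂ R x : ℝ) : ℝ :=
  d₁ * ((∫ y in x₀..x, (y - x₀) * Real.exp (R * (y - x₀)^2) / a y) - d₂)

/-- The weight `γ(t,x) = Θ(t) μ(x)`. -/
def gammaW (a : ℝ → ℝ) (x₀ d₁ d₂ R T t x : ℝ) : ℝ := Theta T t * muW a x₀ d₁ d₂ R x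

/-- Hypotheses (A) of the divergence-form Carleman estimate. -/
def HypA (a : ℝ → ℝ) (x₀ K : ℝ) (wk : Bool) : Prop :=
  cond wk
    (WeaklyDeg a x₀ K ∧ ContDiffOn ℝ 1 a (Icc 0 1 \ {x₀}))
    (StronglyDeg a x₀ K ∧
      (4/3 < K → ∃ ϑ, ϑ ∈ Ioc (0:ℝ) K ∧
        AntitoneOn (fun x => a x / |x - x₀| ^ ϑ) (Ico 0 x₀) ∧
        MonotoneOn (fun x => a x / |x - x₀| ^ ϑ) (Ioc x₀ 1) ∧
        (3/2 < K →
          (∃ ε > 0, ∀ x ∈ Icc (0:ℝ) 1, x ≠ x₀ → ε ≤ a x / |x - x₀| ^ ϑ) ∧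
          ∃ S > 0, ∀ᵐ x ∂(volume.restrict (Icc (0:ℝ) 1)),
            |deriv a x| ≤ S * |x - x₀| ^ (2*ϑ - 3))))

/-- Hypotheses (B) of the non-divergence-form Carleman estimate. -/
def HypB (a : ℝ → ℝ) (x₀ K : ℝ) (wk : Bool) : Prop :=
  Deg a x₀ K wk ∧
  (∃ L : NNReal, LipschitzOnWith L (fun x => (x - x₀) * deriv a x / a x) (Icc 0 1)) ∧
  (1/2 ≤ K → ∃ ϑ, ϑ ∈ Ioc (0:ℝ) K ∧
      AntitoneOn (fun x => a x / |x - x₀| ^ ϑ) (Ico 0 x₀) ∧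
      MonotoneOn (fun x => a x / |x - x₀| ^ ϑ) (Ioc x₀ 1))

/-- `g ∈ L^∞_loc([0,1] ∖ {x₀})`. -/
def LocBddAway (g : ℝ → ℝ) (x₀ : ℝ) : Prop :=
  ∀ c d : ℝ, Icc c d ⊆ Icc (0:ℝ) 1 \ {x₀} →
    ∃ M : ℝ, ∀ x ∈ Icc c d, |g x| ≤ M

/-- `h ∈ W^{1,∞}_loc([0,1] ∖ {x₀}; L^∞(0,1))`. -/
def LocW1inftyAway (h : ℝ → ℝ → ℝ) (x₀ : ℝ) : Prop :=
  ∀ c d : ℝ, Icc c d ⊆ Icc (0:ℝ) 1 \ {x₀} →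
    (∃ M : ℝ, ∀ x ∈ Icc c d, ∀ B ∈ Icc (0:ℝ) 1, |h x B| ≤ M) ∧
    ∃ L : NNReal, ∀ B ∈ Icc (0:ℝ) 1, LipschitzOnWith L (fun x => h x B) (Icc c d)

/-- Hypothesis (O) (with `σ = -1`) resp. (O') (with `σ = 1`):
`σ (a'/(2√a))(∫ₓᴮ g + h₀) + √a g = h(x,B)` for a.e. `x` and all admissible `B`. -/
def HypOgen (σ : ℝ) (a g : ℝ → ℝ) (h : ℝ → ℝ → ℝ) (g₀ h₀ x₀ : ℝ) : Prop :=
  0 < g₀ ∧ 0 < h₀ ∧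
  (∀ᵐ x ∂(volume.restrict (Icc (0:ℝ) 1)), g₀ ≤ g x) ∧
  LocBddAway g x₀ ∧ LocW1inftyAway h x₀ ∧
  ∀ᵐ x ∂(volume.restrict (Icc (0:ℝ) 1)), ∀ B ∈ Icc (0:ℝ) 1,
    ((x < B ∧ B < x₀) ∨ (x₀ < x ∧ x < B)) →
      σ * (deriv a x / (2 * Real.sqrt (a x))) * ((∫ t in x..B, g t) + h₀)
        + Real.sqrt (a x) * g x = h x B

/-- The space-time cylinder `Q_T = (0,T) × (0,1)`. -/
def QT (T : ℝ) : Set (ℝ × ℝ) := Ioo 0 T ×ˢ Ioo (0:ℝ) 1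

/-- The class `𝒱 = L²(0,T; D(A₁)) ∩ H¹(0,T; H¹_a(0,1))`. -/
def InClassV (a : ℝ → ℝ) (x₀ T : ℝ) (wk : Bool) (v : ℝ → ℝ → ℝ) : Prop :=
  (∀ t ∈ Ioo (0:ℝ) T, MemDA1 a (v t) x₀ wk) ∧
  IntegrableOn (fun p : ℝ × ℝ =>
    (v p.1 p.2)^2 + a p.2 * (deriv (v p.1) p.2)^2
      + (deriv (fun y => a y * deriv (v p.1) y) p.2)^2) (QT T) ∧
  IntegrableOn (fun p : ℝ × ℝ =>
    (deriv (fun τ => v τ p.2) p.1)^2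
      + a p.2 * (deriv (fun y => deriv (fun τ => v τ y) p.1) p.2)^2) (QT T)

/-- The class `𝒮 = H¹(0,T; H¹_{1/a}(0,1)) ∩ L²(0,T; H²_{1/a}(0,1))`. -/
def InClassS (a : ℝ → ℝ) (T : ℝ) (v : ℝ → ℝ → ℝ) : Prop :=
  (∀ t ∈ Ioo (0:ℝ) T, MemH2inva a (v t)) ∧
  IntegrableOn (fun p : ℝ × ℝ =>
    (v p.1 p.2)^2 / a p.2 + (deriv (v p.1) p.2)^2
      + a p.2 * (deriv (deriv (v p.1)) p.2)^2) (QT T) ∧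
  IntegrableOn (fun p : ℝ × ℝ =>
    (deriv (fun τ => v τ p.2) p.1)^2 / a p.2
      + (deriv (fun y => deriv (fun τ => v τ y) p.1) p.2)^2) (QT T)

/-- Neumann boundary conditions `v_x(t,0) = v_x(t,1) = 0` for `t ∈ (0,T)`. -/
def NeumannBC (T : ℝ) (v : ℝ → ℝ → ℝ) : Prop :=
  ∀ t ∈ Ioo (0:ℝ) T, deriv (v t) 0 = 0 ∧ deriv (v t) 1 = 0

/-- The equation `v_t + (a v_x)_x = h` in `Q_T`. -/
def SolDiv (a : ℝ → ℝ) (T : ℝ) (v h : ℝ → ℝ → ℝ) : Prop :=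
  ∀ t ∈ Ioo (0:ℝ) T, ∀ x ∈ Ioo (0:ℝ) 1,
    deriv (fun τ => v τ x) t + deriv (fun y => a y * deriv (v t) y) x = h t x

/-- The equation `v_t + a v_xx = h` in `Q_T`. -/
def SolNonDiv (a : ℝ → ℝ) (T : ℝ) (v h : ℝ → ℝ → ℝ) : Prop :=
  ∀ t ∈ Ioo (0:ℝ) T, ∀ x ∈ Ioo (0:ℝ) 1,
    deriv (fun τ => v τ x) t + a x * deriv (deriv (v t)) x = h t x

/-- Test function class `H¹(0,T; L²(0,1)) ∩ L²(0,T; H¹_a(0,1))` for the weak formulation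
in divergence form. -/
def TestClassDiv (a : ℝ → ℝ) (x₀ T : ℝ) (wk : Bool) (φ : ℝ → ℝ → ℝ) : Prop :=
  (∀ t ∈ Icc (0:ℝ) T, MemH1a a (φ t) x₀ wk) ∧
  IntegrableOn (fun p : ℝ × ℝ =>
    (φ p.1 p.2)^2 + a p.2 * (deriv (φ p.1) p.2)^2
      + (deriv (fun τ => φ τ p.2) p.1)^2) (QT T)

/-- Weak solution of `v_t + (a v_x)_x = 0` with Neumann boundary conditions. -/
def WeakSolDiv (a : ℝ → ℝ) (x₀ T : ℝ) (wk : Bool) (v : ℝ → ℝ → ℝ) : Prop :=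
  (∀ t ∈ Icc (0:ℝ) T, MemH1a a (v t) x₀ wk) ∧
  IntegrableOn (fun p : ℝ × ℝ =>
    (v p.1 p.2)^2 + a p.2 * (deriv (v p.1) p.2)^2) (QT T) ∧
  ∀ φ : ℝ → ℝ → ℝ, TestClassDiv a x₀ T wk φ →
    (∫ x in Ioo (0:ℝ) 1, v T x * φ T x) - (∫ x in Ioo (0:ℝ) 1, v 0 x * φ 0 x)
      - (∫ t in Ioo (0:ℝ) T, ∫ x in Ioo (0:ℝ) 1, v t x * deriv (fun τ => φ τ x) t)
      = ∫ t in Ioo (0:ℝ) T, ∫ x in Ioo (0:ℝ) 1, a x * deriv (v t) x * deriv (φ t) x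

/-- Test function class `H¹(0,T; L²_{1/a}(0,1)) ∩ L²(0,T; H¹_{1/a}(0,1))` for the weak
formulation in non-divergence form. -/
def TestClassNonDiv (a : ℝ → ℝ) (T : ℝ) (φ : ℝ → ℝ → ℝ) : Prop :=
  (∀ t ∈ Icc (0:ℝ) T, MemH1inva a (φ t)) ∧
  IntegrableOn (fun p : ℝ × ℝ =>
    (φ p.1 p.2)^2 / a p.2 + (deriv (φ p.1) p.2)^2
      + (deriv (fun τ => φ τ p.2) p.1)^2 / a p.2) (QT T)

/-- Weak solution of `v_t + a v_xx = 0` with Neumann boundary conditions. -/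
def WeakSolNonDiv (a : ℝ → ℝ) (T : ℝ) (v : ℝ → ℝ → ℝ) : Prop :=
  (∀ t ∈ Icc (0:ℝ) T, MemH1inva a (v t)) ∧
  IntegrableOn (fun p : ℝ × ℝ =>
    (v p.1 p.2)^2 / a p.2 + (deriv (v p.1) p.2)^2) (QT T) ∧
  ∀ φ : ℝ → ℝ → ℝ, TestClassNonDiv a T φ →
    (∫ x in Ioo (0:ℝ) 1, v T x * φ T x / a x) - (∫ x in Ioo (0:ℝ) 1, v 0 x * φ 0 x / a x)
      - (∫ t in Ioo (0:ℝ) T, ∫ x in Ioo (0:ℝ) 1, v t x * deriv (fun τ => φ τ x) t / a x)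
      = ∫ t in Ioo (0:ℝ) T, ∫ x in Ioo (0:ℝ) 1, deriv (v t) x * deriv (φ t) x

end

private lemma pow_step_aux {A B r s K : ℝ} (h0r : 0 < r) (hrs : r ≤ s) (hK : K ≤ 2)
    (hB : 0 ≤ B) (h : A * r ^ K ≤ B * s ^ K) : A * r ^ 2 ≤ B * s ^ 2 := by
  have h0s : 0 < s := lt_of_lt_of_le h0r hrs
  have h1 : r ^ (2:ℝ) = r ^ K * r ^ (2 - K) := by
    rw [← Real.rpow_add h0r]; ring_nf
  have h2 : s ^ (2:ℝ) = s ^ K * s ^ (2 - K) := by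
    rw [← Real.rpow_add h0s]; ring_nf
  have key : A * r ^ (2:ℝ) ≤ B * s ^ (2:ℝ) := by
    calc A * r ^ (2:ℝ) = (A * r ^ K) * r ^ (2-K) := by rw [h1]; ring
    _ ≤ (B * s ^ K) * r ^ (2-K) :=
        mul_le_mul_of_nonneg_right h (Real.rpow_nonneg h0r.le _)
    _ ≤ (B * s ^ K) * s ^ (2-K) :=
        mul_le_mul_of_nonneg_left (Real.rpow_le_rpow h0r.le hrs (by linarith))
          (mul_nonneg hB (Real.rpow_nonneg (by linarith) _))
    _ = B * s ^ (2:ℝ) := by rw [h2]; ring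
  have hr2 : r ^ (2:ℝ) = r ^ 2 := by
    rw [show (2:ℝ) = ((2:ℕ):ℝ) by norm_num, Real.rpow_natCast]
  have hs2 : s ^ (2:ℝ) = s ^ 2 := by
    rw [show (2:ℝ) = ((2:ℕ):ℝ) by norm_num, Real.rpow_natCast]
  rw [hr2, hs2] at key; exact key

private lemma aux_right (a : ℝ → ℝ) (x₀ K : ℝ) (hK1 : 1 ≤ K) (hK2 : K < 2)
    (hx₀ : x₀ ∈ Set.Ioo (0:ℝ) 1)
    (hpos : ∀ x ∈ Set.Icc (0:ℝ) 1, x ≠ x₀ → 0 < a x)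
    (hcont : ContinuousOn a (Set.Icc 0 1))
    (hInt : IntervalIntegrable (deriv a) volume 0 1)
    (hsub : ∀ c ∈ Set.Icc (0:ℝ) 1, ∀ d ∈ Set.Icc (0:ℝ) 1,
      a d - a c = ∫ t in c..d, deriv a t)
    (hae : ∀ᵐ t ∂(volume.restrict (Set.Icc (0:ℝ) 1)), (t - x₀) * deriv a t ≤ K * a t)
    (x : ℝ) (hx1 : x ≤ 1) (hxgt : x₀ < x) :
    a 1 * (x - x₀)^2 ≤ a x * (1 - x₀)^2 := by
  have hx0le : (0:ℝ) ≤ x := le_of_lt (lt_trans hx₀.1 hxgt)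
  set g : ℝ → ℝ := fun t => K * a t / (t - x₀) with hg
  -- continuity of g on Icc x 1 and on the open set Ioo x₀ 1
  have hsubI : Set.Icc x 1 ⊆ Set.Icc 0 1 := Set.Icc_subset_Icc hx0le le_rfl
  have hgco : ContinuousOn g (Set.Icc x 1) := by
    apply ContinuousOn.div (continuousOn_const.mul (hcont.mono hsubI))
      ((continuousOn_id).sub continuousOn_const)
    intro t ht; simp only [Pi.sub_apply, id]; intro h0
    have : t = x₀ := by linarith [sub_eq_zero.mp h0]
    linarith [ht.1, this]
  have hgcoO : ContinuousOn g (Set.Ioo x₀ 1) := by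
    apply ContinuousOn.div
      (continuousOn_const.mul (hcont.mono (fun t ht => ⟨le_of_lt (lt_trans hx₀.1 ht.1), ht.2.le⟩)))
      ((continuousOn_id).sub continuousOn_const)
    intro t ht; simp only [Pi.sub_apply, id]; intro h0
    have : t = x₀ := by linarith [sub_eq_zero.mp h0]
    linarith [ht.1, this]
  have hgint : ∀ y ∈ Set.Icc x 1, IntervalIntegrable g volume x y := by
    intro y hy
    apply ContinuousOn.intervalIntegrable
    rw [Set.uIcc_of_le hy.1]
    exact hgco.mono (Set.Icc_subset_Icc le_rfl hy.2)
  have hdint : ∀ y ∈ Set.Icc x 1, IntervalIntegrable (deriv a) volume x y := by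
    intro y hy
    apply hInt.mono_set
    rw [Set.uIcc_of_le hy.1, Set.uIcc_of_le (by norm_num : (0:ℝ) ≤ 1)]
    exact Set.Icc_subset_Icc hx0le hy.2
  set J : ℝ → ℝ := fun y => a x + ∫ t in x..y, g t with hJ
  have haJ : ∀ y ∈ Set.Icc x 1, a y ≤ J y := by
    intro y hy
    have hy01 : y ∈ Set.Icc (0:ℝ) 1 := hsubI hy
    have hs := hsub x ⟨hx0le, hx1⟩ y hy01
    have hmono : (∫ t in x..y, deriv a t) ≤ ∫ t in x..y, g t := by
      apply intervalIntegral.integral_mono_ae_restrict hy.1 (hdint y hy) (hgint y hy)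
      have h1 := ae_restrict_of_ae_restrict_of_subset (Set.Icc_subset_Icc hx0le hy01.2) hae
      filter_upwards [h1, ae_restrict_mem measurableSet_Icc] with t ht htm
      have htx : x₀ < t := lt_of_lt_of_le hxgt htm.1
      rw [hg]
      rw [le_div_iff₀ (by linarith)]
      calc deriv a t * (t - x₀) = (t - x₀) * deriv a t := by ring
      _ ≤ K * a t := ht
    simp only [hJ]; linarith
  have hJpos : ∀ y ∈ Set.Icc x 1, 0 < J y := by
    intro y hy
    exact lt_of_lt_of_le
      (hpos y (hsubI hy) (ne_of_gt (lt_of_lt_of_le hxgt hy.1))) (haJ y hy)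
  -- derivative of J on the interior
  have hJder : ∀ y ∈ Set.Ioo x 1, HasDerivAt J (g y) y := by
    intro y hy
    have hyO : y ∈ Set.Ioo x₀ 1 := ⟨lt_trans hxgt hy.1, hy.2⟩
    have h1 : HasDerivAt (fun u => ∫ t in x..u, g t) (g y) y :=
      intervalIntegral.integral_hasDerivAt_right (hgint y ⟨hy.1.le, hy.2.le⟩)
        (ContinuousOn.stronglyMeasurableAtFilter isOpen_Ioo hgcoO y hyO)
        (hgcoO.continuousAt (isOpen_Ioo.mem_nhds hyO))
    exact h1.const_add (a x)
  set φ : ℝ → ℝ := fun y => J y / (y - x₀) ^ K with hφ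
  have hφder : ∀ y ∈ Set.Ioo x 1,
      HasDerivAt φ ((g y * ((y - x₀) ^ K) - J y * (1 * K * (y - x₀) ^ (K - 1)))
        / ((y - x₀) ^ K) ^ 2) y := by
    intro y hy
    have hy₀ : 0 < y - x₀ := by linarith [hy.1]
    have hv : HasDerivAt (fun y => (y - x₀) ^ K) (1 * K * (y - x₀) ^ (K - 1)) y :=
      ((hasDerivAt_id y).sub_const x₀).rpow_const (Or.inr hK1)
    exact (hJder y hy).div hv (ne_of_gt (Real.rpow_pos_of_pos hy₀ K))
  have hφanti : AntitoneOn φ (Set.Icc x 1) := by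
    apply antitoneOn_of_deriv_nonpos (convex_Icc x 1)
    · -- continuity
      have hJc : ContinuousOn J (Set.Icc x 1) := by
        apply continuousOn_const.add
        have : IntegrableOn g (Set.uIcc x 1) volume := by
          rw [Set.uIcc_of_le hx1]
          exact hgco.integrableOn_Icc
        exact (intervalIntegral.continuousOn_primitive_interval this).mono
          (by rw [Set.uIcc_of_le hx1])
      apply hJc.div
      · apply ContinuousOn.rpow_const ((continuousOn_id).sub continuousOn_const)
        intro t ht; right; linarith
      · intro t ht
        exact ne_of_gt (Real.rpow_pos_of_pos (by linarith [ht.1]) K)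
    · intro y hy
      rw [interior_Icc] at hy
      exact ((hφder y hy).differentiableAt).differentiableWithinAt
    · intro y hy
      rw [interior_Icc] at hy
      rw [(hφder y hy).deriv]
      apply div_nonpos_of_nonpos_of_nonneg _ (sq_nonneg _)
      have hy₀ : 0 < y - x₀ := by linarith [hy.1]
      have hP : 0 < (y - x₀) ^ (K - 1) := Real.rpow_pos_of_pos hy₀ _
      have hid : (y - x₀) ^ K = (y - x₀) * (y - x₀) ^ (K - 1) := by
        nth_rewrite 2 [show y - x₀ = (y - x₀) ^ (1:ℝ) by rw [Real.rpow_one]]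
        rw [← Real.rpow_add hy₀]; ring_nf
      have hgy : g y * ((y - x₀) ^ K) = K * a y * (y - x₀) ^ (K - 1) := by
        rw [hid, hg]; field_simp
      rw [hgy]
      have haJy : a y ≤ J y := haJ y ⟨hy.1.le, hy.2.le⟩
      have h3 : a y * (K * ((y - x₀) ^ (K - 1))) ≤ J y * (K * ((y - x₀) ^ (K - 1))) :=
        mul_le_mul_of_nonneg_right haJy
          (mul_nonneg (by linarith) hP.le)
      nlinarith [h3]
  -- conclude
  have h1 : φ 1 ≤ φ x := hφanti ⟨le_rfl, hx1⟩ ⟨hx1, le_rfl⟩ hx1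
  have hφx : φ x = a x / (x - x₀) ^ K := by
    simp only [hφ, hJ, intervalIntegral.integral_same, add_zero]
  have hφ1 : φ 1 = J 1 / (1 - x₀) ^ K := rfl
  have ha1J : a 1 ≤ J 1 := haJ 1 ⟨hx1, le_rfl⟩
  have hxp : (0:ℝ) < (x - x₀) ^ K := Real.rpow_pos_of_pos (by linarith) K
  have h1p : (0:ℝ) < (1 - x₀) ^ K := Real.rpow_pos_of_pos (by linarith [hx₀.2]) K
  have key : a 1 * (x - x₀) ^ K ≤ a x * (1 - x₀) ^ K := by
    rw [hφx, hφ1] at h1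
    have h2 : a 1 / (1 - x₀) ^ K ≤ a x / (x - x₀) ^ K :=
      le_trans (by gcongr) h1
    exact (div_le_div_iff₀ h1p hxp).1 h2
  have hax : 0 ≤ a x := (hpos x ⟨hx0le, hx1⟩ (ne_of_gt hxgt)).le
  exact pow_step_aux (by linarith) (by linarith) hK2.le hax key

private lemma aux_left (a : ℝ → ℝ) (x₀ K : ℝ) (hK1 : 1 ≤ K) (hK2 : K < 2)
    (hx₀ : x₀ ∈ Set.Ioo (0:ℝ) 1)
    (hpos : ∀ x ∈ Set.Icc (0:ℝ) 1, x ≠ x₀ → 0 < a x)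
    (hcont : ContinuousOn a (Set.Icc 0 1))
    (hInt : IntervalIntegrable (deriv a) volume 0 1)
    (hsub : ∀ c ∈ Set.Icc (0:ℝ) 1, ∀ d ∈ Set.Icc (0:ℝ) 1,
      a d - a c = ∫ t in c..d, deriv a t)
    (hae : ∀ᵐ t ∂(volume.restrict (Set.Icc (0:ℝ) 1)), (t - x₀) * deriv a t ≤ K * a t)
    (x : ℝ) (hx0 : 0 ≤ x) (hxlt : x < x₀) :
    a 0 * (x₀ - x)^2 ≤ a x * x₀^2 := by
  have hx1 : x ≤ 1 := le_of_lt (lt_trans hxlt hx₀.2)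
  set g : ℝ → ℝ := fun t => K * a t / (x₀ - t) with hg
  have hsubI : Set.Icc 0 x ⊆ Set.Icc 0 1 := Set.Icc_subset_Icc le_rfl hx1
  have hgco : ContinuousOn g (Set.Icc 0 x) := by
    apply ContinuousOn.div (continuousOn_const.mul (hcont.mono hsubI))
      (continuousOn_const.sub continuousOn_id)
    intro t ht; simp only [Pi.sub_apply, id]; intro h0
    have : t = x₀ := by linarith [sub_eq_zero.mp h0]
    linarith [ht.2, this]
  have hgcoO : ContinuousOn g (Set.Ioo 0 x₀) := by
    apply ContinuousOn.div
      (continuousOn_const.mul (hcont.mono (fun t ht => ⟨ht.1.le, le_of_lt (lt_trans ht.2 hx₀.2)⟩)))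
      (continuousOn_const.sub continuousOn_id)
    intro t ht; simp only [Pi.sub_apply, id]; intro h0
    have : t = x₀ := by linarith [sub_eq_zero.mp h0]
    linarith [ht.2, this]
  have hgint : ∀ y ∈ Set.Icc 0 x, IntervalIntegrable g volume y x := by
    intro y hy
    apply ContinuousOn.intervalIntegrable
    rw [Set.uIcc_of_le hy.2]
    exact hgco.mono (Set.Icc_subset_Icc hy.1 le_rfl)
  have hdint : ∀ y ∈ Set.Icc 0 x, IntervalIntegrable (deriv a) volume y x := by
    intro y hy
    apply hInt.mono_set
    rw [Set.uIcc_of_le hy.2, Set.uIcc_of_le (by norm_num : (0:ℝ) ≤ 1)]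
    exact Set.Icc_subset_Icc hy.1 hx1
  set J : ℝ → ℝ := fun y => a x - ∫ t in x..y, g t with hJ
  have hJalt : ∀ y, J y = a x + ∫ t in y..x, g t := by
    intro y
    simp only [hJ, intervalIntegral.integral_symm y x]
    ring
  have haJ : ∀ y ∈ Set.Icc 0 x, a y ≤ J y := by
    intro y hy
    have hy01 : y ∈ Set.Icc (0:ℝ) 1 := hsubI hy
    have hs := hsub y hy01 x ⟨hx0, hx1⟩
    have hmono : (∫ t in y..x, (-g t)) ≤ ∫ t in y..x, deriv a t := by
      apply intervalIntegral.integral_mono_ae_restrict hy.2 ((hgint y hy).neg) (hdint y hy)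
      have h1 := ae_restrict_of_ae_restrict_of_subset (Set.Icc_subset_Icc hy01.1 hx1) hae
      filter_upwards [h1, ae_restrict_mem measurableSet_Icc] with t ht htm
      have htx : t < x₀ := lt_of_le_of_lt htm.2 hxlt
      have hd : 0 < x₀ - t := by linarith
      have h2 : -(K * a t / (x₀ - t)) ≤ deriv a t := by
        rw [neg_le, le_div_iff₀ hd]
        nlinarith [ht]
      simpa using h2
    rw [intervalIntegral.integral_neg] at hmono
    rw [hJalt y]
    linarith [hs, hmono]
  have hJpos : ∀ y ∈ Set.Icc 0 x, 0 < J y := by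
    intro y hy
    exact lt_of_lt_of_le
      (hpos y (hsubI hy) (ne_of_lt (lt_of_le_of_lt hy.2 hxlt))) (haJ y hy)
  have hJder : ∀ y ∈ Set.Ioo 0 x, HasDerivAt J (-(g y)) y := by
    intro y hy
    have hyO : y ∈ Set.Ioo 0 x₀ := ⟨hy.1, lt_trans hy.2 hxlt⟩
    have h1 : HasDerivAt (fun u => ∫ t in x..u, g t) (g y) y :=
      intervalIntegral.integral_hasDerivAt_right
        (((hgint y ⟨hy.1.le, hy.2.le⟩)).symm)
        (ContinuousOn.stronglyMeasurableAtFilter isOpen_Ioo hgcoO y hyO)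
        (hgcoO.continuousAt (isOpen_Ioo.mem_nhds hyO))
    simpa using h1.const_sub (a x)
  set φ : ℝ → ℝ := fun y => J y / (x₀ - y) ^ K with hφ
  have hφder : ∀ y ∈ Set.Ioo 0 x,
      HasDerivAt φ ((-(g y) * ((x₀ - y) ^ K) - J y * (-1 * K * (x₀ - y) ^ (K - 1)))
        / ((x₀ - y) ^ K) ^ 2) y := by
    intro y hy
    have hy₀ : 0 < x₀ - y := by linarith [hy.2]
    have hv : HasDerivAt (fun y => (x₀ - y) ^ K) (-1 * K * (x₀ - y) ^ (K - 1)) y :=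
      ((hasDerivAt_id y).const_sub x₀).rpow_const (Or.inr hK1)
    exact (hJder y hy).div hv (ne_of_gt (Real.rpow_pos_of_pos hy₀ K))
  have hφmono : MonotoneOn φ (Set.Icc 0 x) := by
    apply monotoneOn_of_deriv_nonneg (convex_Icc 0 x)
    · have hJc : ContinuousOn J (Set.Icc 0 x) := by
        apply continuousOn_const.sub
        have hint2 : IntegrableOn g (Set.uIcc x 0) volume := by
          rw [Set.uIcc_of_ge hx0]
          exact hgco.integrableOn_Icc
        exact (intervalIntegral.continuousOn_primitive_interval hint2).mono
          (by rw [Set.uIcc_of_ge hx0])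
      apply hJc.div
      · apply ContinuousOn.rpow_const (continuousOn_const.sub continuousOn_id)
        intro t ht; right; linarith
      · intro t ht
        exact ne_of_gt (Real.rpow_pos_of_pos (by linarith [ht.2]) K)
    · intro y hy
      rw [interior_Icc] at hy
      exact ((hφder y hy).differentiableAt).differentiableWithinAt
    · intro y hy
      rw [interior_Icc] at hy
      rw [(hφder y hy).deriv]
      apply div_nonneg _ (sq_nonneg _)
      have hy₀ : 0 < x₀ - y := by linarith [hy.2]
      have hP : 0 < (x₀ - y) ^ (K - 1) := Real.rpow_pos_of_pos hy₀ _
      have hid : (x₀ - y) ^ K = (x₀ - y) * (x₀ - y) ^ (K - 1) := by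
        nth_rewrite 2 [show x₀ - y = (x₀ - y) ^ (1:ℝ) by rw [Real.rpow_one]]
        rw [← Real.rpow_add hy₀]; ring_nf
      have hgy : g y * ((x₀ - y) ^ K) = K * a y * (x₀ - y) ^ (K - 1) := by
        rw [hid, hg]; field_simp
      have haJy : a y ≤ J y := haJ y ⟨hy.1.le, hy.2.le⟩
      have h3 : a y * (K * ((x₀ - y) ^ (K - 1))) ≤ J y * (K * ((x₀ - y) ^ (K - 1))) :=
        mul_le_mul_of_nonneg_right haJy (mul_nonneg (by linarith) hP.le)
      nlinarith [h3, hgy]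
  have h1 : φ 0 ≤ φ x := hφmono ⟨le_rfl, hx0⟩ ⟨hx0, le_rfl⟩ hx0
  have hφx : φ x = a x / (x₀ - x) ^ K := by
    simp only [hφ, hJ, intervalIntegral.integral_same, sub_zero]
  have hφ0 : φ 0 = J 0 / x₀ ^ K := by simp only [hφ, sub_zero]
  have ha0J : a 0 ≤ J 0 := haJ 0 ⟨le_rfl, hx0⟩
  have hxp : (0:ℝ) < (x₀ - x) ^ K := Real.rpow_pos_of_pos (by linarith) K
  have h0p : (0:ℝ) < x₀ ^ K := Real.rpow_pos_of_pos hx₀.1 K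
  have key : a 0 * (x₀ - x) ^ K ≤ a x * x₀ ^ K := by
    rw [hφx, hφ0] at h1
    have h2 : a 0 / x₀ ^ K ≤ a x / (x₀ - x) ^ K :=
      le_trans (by gcongr) h1
    exact (div_le_div_iff₀ h0p hxp).1 h2
  have hax : 0 ≤ a x := (hpos x ⟨hx0, hx1⟩ (ne_of_lt hxlt)).le
  exact pow_step_aux (by linarith) (by linarith) hK2.le hax key

/-- Pointwise bound `(x-x₀)²/a(x) ≤ max{x₀²/a(0), (1-x₀)²/a(1)}`. -/
theorem statement9 (a : ℝ → ℝ) (x₀ : ℝ) (ha : ∃ K, StronglyDeg a x₀ K) :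
    ∀ x ∈ Icc (0:ℝ) 1, x ≠ x₀ →
      (x - x₀)^2 / a x ≤ max (x₀^2 / a 0) ((1 - x₀)^2 / a 1) := by
  obtain ⟨K, ⟨hx₀, ha0, hpos, hae⟩, ⟨⟨hInt, hFTC⟩, _⟩, hK1, hK2⟩ := ha
  have hII : ∀ d ∈ Set.Icc (0:ℝ) 1, IntervalIntegrable (deriv a) volume 0 d := by
    intro d hd
    apply hInt.mono_set
    rw [Set.uIcc_of_le hd.1, Set.uIcc_of_le (by norm_num : (0:ℝ) ≤ 1)]
    exact Set.Icc_subset_Icc le_rfl hd.2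
  have hcont : ContinuousOn a (Set.Icc 0 1) := by
    have hIntOn : IntegrableOn (deriv a) (Set.uIcc 0 1) volume := by
      rw [Set.uIcc_of_le (by norm_num : (0:ℝ) ≤ 1)]
      exact (intervalIntegrable_iff_integrableOn_Icc_of_le (by norm_num)).1 hInt
    have h1 : ContinuousOn (fun y => a 0 + ∫ t in (0:ℝ)..y, deriv a t) (Set.Icc 0 1) := by
      apply continuousOn_const.add
      have h2 := intervalIntegral.continuousOn_primitive_interval hIntOn
      rwa [Set.uIcc_of_le (by norm_num : (0:ℝ) ≤ 1)] at h2
    exact h1.congr (fun y hy => hFTC y hy)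
  have hsub : ∀ c ∈ Set.Icc (0:ℝ) 1, ∀ d ∈ Set.Icc (0:ℝ) 1,
      a d - a c = ∫ t in c..d, deriv a t := by
    intro c hc d hd
    have h2 := intervalIntegral.integral_interval_sub_left (hII d hd) (hII c hc)
    rw [hFTC d hd, hFTC c hc]
    linarith [h2]
  intro x hx hne
  have hax : 0 < a x := hpos x hx hne
  rcases hne.lt_or_gt with hlt | hgt
  · have ha0' : 0 < a 0 := hpos 0 ⟨le_rfl, by norm_num⟩ (ne_of_lt hx₀.1)
    have key := aux_left a x₀ K hK1 hK2 hx₀ hpos hcont hInt hsub hae x hx.1 hlt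
    refine le_trans ?_ (le_max_left _ _)
    rw [div_le_div_iff₀ hax ha0']
    have hsq : (x - x₀)^2 = (x₀ - x)^2 := by ring
    rw [hsq]
    nlinarith [key]
  · have ha1' : 0 < a 1 := hpos 1 ⟨by norm_num, le_rfl⟩ (ne_of_gt hx₀.2)
    have key := aux_right a x₀ K hK1 hK2 hx₀ hpos hcont hInt hsub hae x hx.2 hgt
    refine le_trans ?_ (le_max_right _ _)
    rw [div_le_div_iff₀ hax ha1']
    nlinarith [key]
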